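/- Let H be a Hilbert space with a direct sum decomposition indexed by a set I, and suppose H has infinite multiplicity in the sense that H ≅ H ⊕ K_i (as unitary equivalence of representations) for each i ∈ I, where K_i ⊆ H are subspaces whose union is cyclic. If H embeds into ⊕_i K_i, then H ≅ ⊕_i K_i. -/

import Mathlib

noncomputable section

namespace Stmt16Aux

theorem WithLp.equiv_symm_fst {p : ENNReal} {α β : Type*} (x : α × β) :
    ((_root_.WithLp.equiv p (α × β)).symm x).fst = x.fst := rfl

theorem WithLp.equiv_symm_snd {p : ENNReal} {α β : Type*} (x : α × β) :
    ((_root_.WithLp.equiv p (α × β)).symm x).snd = x.snd := rfl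

theorem WithLp.equiv_fst {p : ENNReal} {α β : Type*} (x : _root_.WithLp p (α × β)) :
    (_root_.WithLp.equiv p (α × β) x).fst = x.fst := rfl

theorem WithLp.equiv_snd {p : ENNReal} {α β : Type*} (x : _root_.WithLp p (α × β)) :
    (_root_.WithLp.equiv p (α × β) x).snd = x.snd := rfl

theorem orthogonalProjection_add_orthogonalProjection_orthogonal {X : Type*}
    [NormedAddCommGroup X] [InnerProductSpace ℂ X] (V : Submodule ℂ X)
    [V.HasOrthogonalProjection] (x : X) :
    (Submodule.orthogonalProjectionOnto V x : X) + (Submodule.orthogonalProjectionOnto Vᗮ x : X)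
      = x :=
  V.starProjection_add_starProjection_orthogonal x

theorem memℓp_two_iff {α : Type*} {E : α → Type*} [∀ i, NormedAddCommGroup (E i)] {f : ∀ i, E i} :
    Memℓp f 2 ↔ Summable (fun i => ‖f i‖ ^ (2 : ℝ)) := by
  rw [memℓp_gen_iff (by norm_num)]
  norm_num

theorem rpow_two_eq (x : ℝ) : x ^ (2 : ℝ) = x ^ 2 := by
  rw [show (2 : ℝ) = ((2 : ℕ) : ℝ) by norm_num, Real.rpow_natCast]

open Classical in
theorem hasSum_option {α : Type*} {E : Type*} [AddCommMonoid E] [TopologicalSpace E]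
    [ContinuousAdd E] {f : Option α → E} {a : E} (h : HasSum (fun k => f (some k)) a) :
    HasSum f (f none + a) := by
  have h1 : HasSum (fun o : Option α => if o = none then f none else 0) (f none) :=
    hasSum_ite_eq none (f none)
  have h2 : HasSum (fun o : Option α => if o = none then 0 else f o) a := by
    refine (Function.Injective.hasSum_iff (Option.some_injective α) ?_).1 ?_
    · intro x hx
      have : x = none := by
        cases x with
        | none => rfl
        | some y => exact absurd ⟨y, rfl⟩ hx
      simp [this]
    · simpa [Function.comp_def] using h
  have := h1.add h2
  convert this using 1
  funext o
  cases o <;> simp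

section congr
variable {α : Type*} {E F : α → Type*}
  [∀ i, NormedAddCommGroup (E i)] [∀ i, InnerProductSpace ℂ (E i)]
  [∀ i, NormedAddCommGroup (F i)] [∀ i, InnerProductSpace ℂ (F i)]

theorem memℓp_map (e : ∀ i, E i ≃ₗᵢ[ℂ] F i) (f : lp E 2) :
    Memℓp (fun i => e i (f i)) 2 := by
  rw [memℓp_two_iff]
  simpa [(e _).norm_map] using memℓp_two_iff.1 (lp.memℓp f)

/-- congruence of `lp` along componentwise isometries -/
def lpCongr (e : ∀ i, E i ≃ₗᵢ[ℂ] F i) : lp E 2 ≃ₗᵢ[ℂ] lp F 2 :=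
  LinearEquiv.isometryOfInner
    { toFun := fun f => ⟨fun i => e i (f i), memℓp_map e f⟩
      invFun := fun g => ⟨fun i => (e i).symm (g i), memℓp_map (fun i => (e i).symm) g⟩
      map_add' := fun f g => by
        apply lp.ext
        funext i
        simp [lp.coeFn_add]; rfl
      map_smul' := fun c f => by
        apply lp.ext
        funext i
        simp [lp.coeFn_smul]
      left_inv := fun f => by
        apply lp.ext
        funext i
        simp
      right_inv := fun g => by
        apply lp.ext
        funext i
        simp }
    (fun f g => by
      simp only [lp.inner_eq_tsum]
      exact tsum_congr fun i => (e i).inner_map_map _ _)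

@[simp] theorem lpCongr_apply (e : ∀ i, E i ≃ₗᵢ[ℂ] F i) (f : lp E 2) (i : α) :
    (lpCongr e f : ∀ i, F i) i = e i (f i) := rfl

end congr

section prodsplit
variable {α : Type*} {E F : α → Type*}
  [∀ i, NormedAddCommGroup (E i)] [∀ i, InnerProductSpace ℂ (E i)]
  [∀ i, NormedAddCommGroup (F i)] [∀ i, InnerProductSpace ℂ (F i)]

theorem fst_norm_le {G G' : Type*} [NormedAddCommGroup G] [NormedAddCommGroup G']
    (x : WithLp 2 (G × G')) : ‖x.fst‖ ≤ ‖x‖ ∧ ‖x.snd‖ ≤ ‖x‖ := by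
  rw [WithLp.prod_norm_eq_of_L2]
  constructor
  · calc ‖x.fst‖ = Real.sqrt (‖x.fst‖ ^ 2) := (Real.sqrt_sq (norm_nonneg _)).symm
      _ ≤ _ := Real.sqrt_le_sqrt (le_add_of_nonneg_right (sq_nonneg _))
  · calc ‖x.snd‖ = Real.sqrt (‖x.snd‖ ^ 2) := (Real.sqrt_sq (norm_nonneg _)).symm
      _ ≤ _ := Real.sqrt_le_sqrt (le_add_of_nonneg_left (sq_nonneg _))

theorem memℓp_fst (ξ : lp (fun i => WithLp 2 (E i × F i)) 2) :
    Memℓp (fun i => (ξ i).fst) 2 := by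
  rw [memℓp_two_iff]
  refine Summable.of_nonneg_of_le (fun i => by positivity)
    (fun i => ?_) (memℓp_two_iff.1 (lp.memℓp ξ))
  exact Real.rpow_le_rpow (norm_nonneg _) (fst_norm_le (ξ i)).1 (by norm_num)

theorem memℓp_snd (ξ : lp (fun i => WithLp 2 (E i × F i)) 2) :
    Memℓp (fun i => (ξ i).snd) 2 := by
  rw [memℓp_two_iff]
  refine Summable.of_nonneg_of_le (fun i => by positivity)
    (fun i => ?_) (memℓp_two_iff.1 (lp.memℓp ξ))
  exact Real.rpow_le_rpow (norm_nonneg _) (fst_norm_le (ξ i)).2 (by norm_num)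

theorem memℓp_pair (u : lp E 2) (v : lp F 2) :
    Memℓp (fun i => ((WithLp.equiv 2 (E i × F i)).symm (u i, v i))) 2 := by
  rw [memℓp_two_iff]
  have hu := memℓp_two_iff.1 (lp.memℓp u)
  have hv := memℓp_two_iff.1 (lp.memℓp v)
  have := hu.add hv
  refine this.congr fun i => ?_
  rw [rpow_two_eq, rpow_two_eq, rpow_two_eq, WithLp.prod_norm_sq_eq_of_L2,
    WithLp.equiv_symm_fst, WithLp.equiv_symm_snd]

/-- an `lp`-sum of `L²` products is the `L²` product of the `lp` sums -/
def lpProdSplit : lp (fun i => WithLp 2 (E i × F i)) 2 ≃ₗᵢ[ℂ] WithLp 2 (lp E 2 × lp F 2) :=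
  LinearEquiv.isometryOfInner
    { toFun := fun ξ => (WithLp.equiv 2 _).symm
        (⟨fun i => (ξ i).fst, memℓp_fst ξ⟩, ⟨fun i => (ξ i).snd, memℓp_snd ξ⟩)
      invFun := fun p => ⟨fun i =>
          (WithLp.equiv 2 (E i × F i)).symm ((p.fst : ∀ i, E i) i, (p.snd : ∀ i, F i) i),
        memℓp_pair p.fst p.snd⟩
      map_add' := fun ξ η => by
        apply WithLp.ofLp_injective; apply Prod.ext <;>
        · apply lp.ext
          funext i
          simp [lp.coeFn_add]; rfl
      map_smul' := fun c ξ => by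
        apply WithLp.ofLp_injective; apply Prod.ext <;>
        · apply lp.ext
          funext i
          simp [lp.coeFn_smul]
      left_inv := fun ξ => by
        apply lp.ext
        funext i
        rfl
      right_inv := fun p => by
        apply WithLp.ofLp_injective; apply Prod.ext <;>
        · apply lp.ext
          funext i
          rfl }
    (fun ξ η => by
      simp only [lp.inner_eq_tsum, WithLp.prod_inner_apply]
      have h1 : Summable fun i => (inner ℂ ((ξ i).fst) ((η i).fst) : ℂ) :=
        lp.summable_inner (⟨fun i => (ξ i).fst, memℓp_fst ξ⟩ : lp E 2)
          (⟨fun i => (η i).fst, memℓp_fst η⟩ : lp E 2)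
      have h2 : Summable fun i => (inner ℂ ((ξ i).snd) ((η i).snd) : ℂ) :=
        lp.summable_inner (⟨fun i => (ξ i).snd, memℓp_snd ξ⟩ : lp F 2)
          (⟨fun i => (η i).snd, memℓp_snd η⟩ : lp F 2)
      calc (∑' i, (inner ℂ ((ξ i).fst) ((η i).fst) : ℂ)) + ∑' i, (inner ℂ ((ξ i).snd) ((η i).snd) : ℂ)
          = ∑' i, ((inner ℂ ((ξ i).fst) ((η i).fst) : ℂ) + inner ℂ ((ξ i).snd) ((η i).snd)) :=
            (Summable.tsum_add h1 h2).symm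
        _ = ∑' i, (inner ℂ (ξ i) (η i) : ℂ) := by
            exact tsum_congr fun i => (WithLp.prod_inner_apply _ _).symm)

@[simp] theorem lpProdSplit_fst (ξ : lp (fun i => WithLp 2 (E i × F i)) 2) (i : α) :
    (((lpProdSplit ξ : WithLp 2 (lp E 2 × lp F 2)).fst : lp E 2) : ∀ i, E i) i = (ξ i).fst := rfl

@[simp] theorem lpProdSplit_snd (ξ : lp (fun i => WithLp 2 (E i × F i)) 2) (i : α) :
    (((lpProdSplit ξ : WithLp 2 (lp E 2 × lp F 2)).snd : lp F 2) : ∀ i, F i) i = (ξ i).snd := rfl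

end prodsplit

section reindex
variable {α β : Type*} (q : α ≃ β)
variable (H : Type*) [NormedAddCommGroup H] [InnerProductSpace ℂ H]

theorem memℓp_reindex (f : lp (fun _ : α => H) 2) :
    Memℓp (fun b => (f : ∀ _ : α, H) (q.symm b)) 2 := by
  rw [memℓp_two_iff]
  exact (q.symm.summable_iff (f := fun a => ‖(f : ∀ _ : α, H) a‖ ^ (2:ℝ))).2
    (memℓp_two_iff.1 (lp.memℓp f))

/-- reindexing of an `lp` space with constant fibers -/
def lpReindex : lp (fun _ : α => H) 2 ≃ₗᵢ[ℂ] lp (fun _ : β => H) 2 :=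
  LinearEquiv.isometryOfInner
    { toFun := fun f => ⟨fun b => (f : ∀ _ : α, H) (q.symm b), memℓp_reindex q H f⟩
      invFun := fun g => ⟨fun a => (g : ∀ _ : β, H) (q a), by
        show Memℓp _ 2; simpa using memℓp_reindex q.symm H g⟩
      map_add' := fun f g => by
        apply lp.ext; funext b; simp [lp.coeFn_add]; rfl
      map_smul' := fun c f => by
        apply lp.ext; funext b; simp [lp.coeFn_smul]
      left_inv := fun f => by apply lp.ext; funext a; simp
      right_inv := fun g => by apply lp.ext; funext b; simp }
    (fun f g => by
      simp only [lp.inner_eq_tsum]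
      exact q.symm.tsum_eq (fun a => (inner ℂ ((f : ∀ _ : α, H) a) ((g : ∀ _ : α, H) a) : ℂ)))

@[simp] theorem lpReindex_apply (f : lp (fun _ : α => H) 2) (b : β) :
    (lpReindex q H f : ∀ _ : β, H) b = (f : ∀ _ : α, H) (q.symm b) := rfl

end reindex

section optionsplit
variable {α : Type*} (H : Type*) [NormedAddCommGroup H] [InnerProductSpace ℂ H]

theorem memℓp_some (f : lp (fun _ : Option α => H) 2) :
    Memℓp (fun a => (f : ∀ _ : Option α, H) (some a)) 2 := by
  rw [memℓp_two_iff]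
  exact (memℓp_two_iff.1 (lp.memℓp f)).comp_injective (Option.some_injective α)

theorem memℓp_optionElim (x : H) (u : lp (fun _ : α => H) 2) :
    Memℓp (fun o : Option α => o.elim x (fun a => (u : ∀ _ : α, H) a)) 2 := by
  rw [memℓp_two_iff]
  exact (hasSum_option (f := fun o : Option α => ‖o.elim x (fun a => (u : ∀ _ : α, H) a)‖ ^ (2:ℝ))
    (memℓp_two_iff.1 (lp.memℓp u)).hasSum).summable

set_option maxHeartbeats 1000000 in
/-- splitting off the `none` coordinate of an `lp` space over `Option α` -/
def lpOptionSplit : lp (fun _ : Option α => H) 2 ≃ₗᵢ[ℂ] WithLp 2 (H × lp (fun _ : α => H) 2) :=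
  LinearEquiv.isometryOfInner
    { toFun := fun f => (WithLp.equiv 2 _).symm
        ((f : ∀ _ : Option α, H) none, ⟨fun a => (f : ∀ _ : Option α, H) (some a), memℓp_some H f⟩)
      invFun := fun p => ⟨fun o => o.elim p.fst (fun a => (p.snd : ∀ _ : α, H) a),
        memℓp_optionElim H p.fst p.snd⟩
      map_add' := fun f g => by
        apply WithLp.ofLp_injective; apply Prod.ext
        · rfl
        · apply lp.ext; funext a; simp [lp.coeFn_add]; rfl
      map_smul' := fun c f => by
        apply WithLp.ofLp_injective; apply Prod.ext
        · rfl
        · apply lp.ext; funext a; simp [lp.coeFn_smul]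
      left_inv := fun f => by
        apply lp.ext; funext o; cases o <;> rfl
      right_inv := fun p => by
        apply WithLp.ofLp_injective; apply Prod.ext
        · rfl
        · apply lp.ext; funext a; rfl }
    (fun f g => by
      simp only [lp.inner_eq_tsum, WithLp.prod_inner_apply]
      have hs : Summable fun a =>
          (inner ℂ ((f : ∀ _ : Option α, H) (some a)) ((g : ∀ _ : Option α, H) (some a)) : ℂ) :=
        lp.summable_inner (⟨fun a => (f : ∀ _ : Option α, H) (some a), memℓp_some H f⟩ :
            lp (fun _ : α => H) 2)
          (⟨fun a => (g : ∀ _ : Option α, H) (some a), memℓp_some H g⟩ : lp (fun _ : α => H) 2)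
      have := hasSum_option
        (f := fun o => (inner ℂ ((f : ∀ _ : Option α, H) o) ((g : ∀ _ : Option α, H) o) : ℂ))
        hs.hasSum
      exact (this.tsum_eq).symm ▸ rfl)

@[simp] theorem lpOptionSplit_symm_apply (p : WithLp 2 (H × lp (fun _ : α => H) 2))
    (o : Option α) :
    ((lpOptionSplit H).symm p : ∀ _ : Option α, H) o
      = o.elim p.fst (fun a => (p.snd : ∀ _ : α, H) a) := rfl

end optionsplit

section prodmaps
variable {E F G E' F' : Type*}
  [NormedAddCommGroup E] [InnerProductSpace ℂ E]
  [NormedAddCommGroup F] [InnerProductSpace ℂ F]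
  [NormedAddCommGroup G] [InnerProductSpace ℂ G]
  [NormedAddCommGroup E'] [InnerProductSpace ℂ E']
  [NormedAddCommGroup F'] [InnerProductSpace ℂ F']

/-- product of two isometry equivalences on `L²` products -/
def prodCongrLI (e1 : E ≃ₗᵢ[ℂ] E') (e2 : F ≃ₗᵢ[ℂ] F') :
    WithLp 2 (E × F) ≃ₗᵢ[ℂ] WithLp 2 (E' × F') :=
  LinearEquiv.isometryOfInner
    { toFun := fun p => (WithLp.equiv 2 _).symm (e1 p.fst, e2 p.snd)
      invFun := fun p => (WithLp.equiv 2 _).symm (e1.symm p.fst, e2.symm p.snd)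
      map_add' := fun p q => by
        apply WithLp.ofLp_injective; apply Prod.ext <;> simp [WithLp.add_fst, WithLp.add_snd]
      map_smul' := fun c p => by
        apply WithLp.ofLp_injective; apply Prod.ext <;> simp [WithLp.smul_fst, WithLp.smul_snd]
      left_inv := fun p => by apply WithLp.ofLp_injective; apply Prod.ext <;> simp
      right_inv := fun p => by apply WithLp.ofLp_injective; apply Prod.ext <;> simp }
    (fun p q => by
      simp only [WithLp.prod_inner_apply]
      simp [LinearIsometryEquiv.inner_map_map])

@[simp] theorem prodCongrLI_fst (e1 : E ≃ₗᵢ[ℂ] E') (e2 : F ≃ₗᵢ[ℂ] F') (p : WithLp 2 (E × F)) :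
    (prodCongrLI e1 e2 p).fst = e1 p.fst := rfl

@[simp] theorem prodCongrLI_snd (e1 : E ≃ₗᵢ[ℂ] E') (e2 : F ≃ₗᵢ[ℂ] F') (p : WithLp 2 (E × F)) :
    (prodCongrLI e1 e2 p).snd = e2 p.snd := rfl

@[simp] theorem prodCongrLI_symm_fst (e1 : E ≃ₗᵢ[ℂ] E') (e2 : F ≃ₗᵢ[ℂ] F')
    (p : WithLp 2 (E' × F')) : ((prodCongrLI e1 e2).symm p).fst = e1.symm p.fst := rfl

@[simp] theorem prodCongrLI_symm_snd (e1 : E ≃ₗᵢ[ℂ] E') (e2 : F ≃ₗᵢ[ℂ] F')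
    (p : WithLp 2 (E' × F')) : ((prodCongrLI e1 e2).symm p).snd = e2.symm p.snd := rfl

/-- associativity of `L²` products -/
def prodAssocLI : WithLp 2 (E × WithLp 2 (F × G)) ≃ₗᵢ[ℂ] WithLp 2 (WithLp 2 (E × F) × G) :=
  LinearEquiv.isometryOfInner
    { toFun := fun p => (WithLp.equiv 2 _).symm
        ((WithLp.equiv 2 _).symm (p.fst, p.snd.fst), p.snd.snd)
      invFun := fun p => (WithLp.equiv 2 _).symm
        (p.fst.fst, (WithLp.equiv 2 _).symm (p.fst.snd, p.snd))
      map_add' := fun p q => rfl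
      map_smul' := fun c p => rfl
      left_inv := fun p => rfl
      right_inv := fun p => rfl }
    (fun p q => by
      simp only [WithLp.prod_inner_apply]
      change _ = inner ℂ p.fst q.fst + (inner ℂ p.snd.fst q.snd.fst + inner ℂ p.snd.snd q.snd.snd)
      change inner ℂ p.fst q.fst + inner ℂ p.snd.fst q.snd.fst + inner ℂ p.snd.snd q.snd.snd = _
      ring)

@[simp] theorem prodAssocLI_fst (p : WithLp 2 (E × WithLp 2 (F × G))) :
    (prodAssocLI p : WithLp 2 (WithLp 2 (E × F) × G)).fst
      = (WithLp.equiv 2 (E × F)).symm (p.fst, p.snd.fst) := rfl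

@[simp] theorem prodAssocLI_snd (p : WithLp 2 (E × WithLp 2 (F × G))) :
    (prodAssocLI p : WithLp 2 (WithLp 2 (E × F) × G)).snd = p.snd.snd := rfl

end prodmaps

section orth
variable {X : Type*} [NormedAddCommGroup X] [InnerProductSpace ℂ X] [CompleteSpace X]

/-- orthogonal decomposition of a Hilbert space along a closed submodule -/
def orthSplit (V : Submodule ℂ X) [CompleteSpace V] : X ≃ₗᵢ[ℂ] WithLp 2 (V × Vᗮ) :=
  LinearEquiv.isometryOfInner
    { toFun := fun x => (WithLp.equiv 2 _).symm
        (Submodule.orthogonalProjectionOnto V x, Submodule.orthogonalProjectionOnto Vᗮ x)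
      invFun := fun p => (p.fst : X) + (p.snd : X)
      map_add' := fun x y => by apply WithLp.ofLp_injective; apply Prod.ext <;> simp
      map_smul' := fun c x => by apply WithLp.ofLp_injective; apply Prod.ext <;> simp
      left_inv := fun x => by
        simpa using orthogonalProjection_add_orthogonalProjection_orthogonal V x
      right_inv := fun p => by
        apply WithLp.ofLp_injective; apply Prod.ext
        · have h1 : Submodule.orthogonalProjectionOnto V (p.fst : X) = p.fst :=
            Submodule.orthogonalProjectionOnto_mem_subspace_eq_self p.fst
          have h2 : Submodule.orthogonalProjectionOnto V (p.snd : X) = 0 :=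
            Submodule.orthogonalProjectionOnto_apply_of_mem_orthogonal p.snd.2
          simp [h1, h2]
        · have h1 : Submodule.orthogonalProjectionOnto Vᗮ (p.fst : X) = 0 :=
            Submodule.orthogonalProjectionOnto_apply_of_mem_orthogonal
              (Submodule.le_orthogonal_orthogonal V p.fst.2)
          have h2 : Submodule.orthogonalProjectionOnto Vᗮ (p.snd : X) = p.snd :=
            Submodule.orthogonalProjectionOnto_mem_subspace_eq_self p.snd
          simp [h1, h2] }
    (fun x y => by
      simp only [WithLp.prod_inner_apply]
      have hx := (orthogonalProjection_add_orthogonalProjection_orthogonal V x).symm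
      have hy := (orthogonalProjection_add_orthogonalProjection_orthogonal V y).symm
      calc (inner ℂ (Submodule.orthogonalProjectionOnto V x) (Submodule.orthogonalProjectionOnto V y) : ℂ)
            + inner ℂ (Submodule.orthogonalProjectionOnto Vᗮ x) (Submodule.orthogonalProjectionOnto Vᗮ y)
          = inner ℂ ((Submodule.orthogonalProjectionOnto V x : X) + Submodule.orthogonalProjectionOnto Vᗮ x)
              ((Submodule.orthogonalProjectionOnto V y : X) + Submodule.orthogonalProjectionOnto Vᗮ y) := by
            rw [inner_add_left, inner_add_right, inner_add_right]
            rw [Submodule.inner_right_of_mem_orthogonal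
                (Submodule.orthogonalProjectionOnto V x).2 (Submodule.orthogonalProjectionOnto Vᗮ y).2,
              Submodule.inner_left_of_mem_orthogonal
                (Submodule.orthogonalProjectionOnto V y).2 (Submodule.orthogonalProjectionOnto Vᗮ x).2]
            simp only [Submodule.coe_inner]
            ring
        _ = inner ℂ x y := by rw [← hx, ← hy])

@[simp] theorem orthSplit_fst (V : Submodule ℂ X) [CompleteSpace V] (x : X) :
    (orthSplit V x).fst = Submodule.orthogonalProjectionOnto V x := rfl

@[simp] theorem orthSplit_snd (V : Submodule ℂ X) [CompleteSpace V] (x : X) :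
    (orthSplit V x).snd = Submodule.orthogonalProjectionOnto Vᗮ x := rfl

@[simp] theorem orthSplit_symm_apply (V : Submodule ℂ X) [CompleteSpace V]
    (p : WithLp 2 (V × Vᗮ)) : (orthSplit V).symm p = (p.fst : X) + (p.snd : X) := rfl

end orth
end Stmt16Aux

open Stmt16Aux

set_option maxHeartbeats 2000000 in
/-- Eilenberg-swindle, Lemma 3.3: let `H` and `K i` (`i ∈ ι`, `ι`
infinite) be Hilbert spaces carrying representations `ρ`, `σ i` of a fixed index type
`A` of operators closed under adjoints, and let `D`/`DH` denote the diagonal actions on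
the Hilbert direct sums `⊕ᵢ K i` and `⊕ᵢ H`.  If `H` has infinite multiplicity in the
sense that `H ≅ ⊕ᵢ H` and `H ⊕ K i ≅ H` equivariantly for every `i`, and `H` embeds
equivariantly and isometrically into `⊕ᵢ K i` (as a subrepresentation), then
`H ≅ ⊕ᵢ K i` equivariantly. -/
theorem stmt16 {ι : Type*} [Infinite ι] {A : Type*}
    {H : Type*} [NormedAddCommGroup H] [InnerProductSpace ℂ H] [CompleteSpace H]
    {K : ι → Type*} [∀ i, NormedAddCommGroup (K i)] [∀ i, InnerProductSpace ℂ (K i)]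
    [∀ i, CompleteSpace (K i)]
    (ρ : A → (H →L[ℂ] H)) (σ : ∀ i, A → (K i →L[ℂ] K i))
    -- the operator set is closed under adjoints
    (st : A → A)
    (hstρ : ∀ a, ρ (st a) = ContinuousLinearMap.adjoint (ρ a))
    (hstσ : ∀ i a, σ i (st a) = ContinuousLinearMap.adjoint (σ i a))
    -- the diagonal action on `⊕ᵢ K i`
    (D : A → (lp (fun i => K i) 2 →L[ℂ] lp (fun i => K i) 2))
    (hD : ∀ a ξ i, (D a ξ : ∀ i, K i) i = σ i a ((ξ : ∀ i, K i) i))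
    -- the diagonal action on `⊕ᵢ H`
    (DH : A → (lp (fun _ : ι => H) 2 →L[ℂ] lp (fun _ : ι => H) 2))
    (hDH : ∀ a ξ i, (DH a ξ : ∀ _ : ι, H) i = ρ a ((ξ : ∀ _ : ι, H) i))
    -- infinite multiplicity: `H ≅ ⊕ᵢ H` equivariantly
    (hinf : ∃ e : lp (fun _ : ι => H) 2 ≃ₗᵢ[ℂ] H, ∀ a ξ, e (DH a ξ) = ρ a (e ξ))
    -- absorption: `H ⊕ K i ≅ H` equivariantly for each `i`
    (habs : ∀ i, ∃ e : WithLp 2 (H × K i) ≃ₗᵢ[ℂ] H, ∀ a p,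
      e ((WithLp.equiv 2 (H × K i)).symm
          (ρ a ((WithLp.equiv 2 (H × K i)) p).1, σ i a ((WithLp.equiv 2 (H × K i)) p).2))
        = ρ a (e p))
    -- `H` embeds into `⊕ᵢ K i` as a subrepresentation
    (hemb : ∃ j : H →ₗᵢ[ℂ] lp (fun i => K i) 2, ∀ a x, j (ρ a x) = D a (j x)) :
    ∃ e : H ≃ₗᵢ[ℂ] lp (fun i => K i) 2, ∀ a x, e (ρ a x) = D a (e x) := by
  classical
  obtain ⟨e0, he0⟩ := hinf
  choose f hf using habs
  obtain ⟨j, hj⟩ := hemb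
  -- reformulate the absorption equivariance
  have hf' : ∀ i a (p : WithLp 2 (H × K i)),
      f i ((WithLp.equiv 2 (H × K i)).symm (ρ a p.fst, σ i a p.snd)) = ρ a (f i p) := by
    intro i a p
    simpa [WithLp.equiv_fst, WithLp.equiv_snd] using hf i a p
  have hfs : ∀ i a (x : H),
      (f i).symm (ρ a x) = (WithLp.equiv 2 (H × K i)).symm
        (ρ a ((f i).symm x).fst, σ i a ((f i).symm x).snd) := by
    intro i a x
    apply (f i).injective
    rw [LinearIsometryEquiv.apply_symm_apply, hf' i a ((f i).symm x),
      LinearIsometryEquiv.apply_symm_apply]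
  have he0s : ∀ a x, e0.symm (ρ a x) = DH a (e0.symm x) := by
    intro a x
    apply e0.injective
    rw [LinearIsometryEquiv.apply_symm_apply, he0, LinearIsometryEquiv.apply_symm_apply]
  -- the adjoint of the diagonal action
  have hDadj : ∀ a, D (st a) = ContinuousLinearMap.adjoint (D a) := by
    intro a
    rw [ContinuousLinearMap.eq_adjoint_iff]
    intro x y
    rw [lp.inner_eq_tsum, lp.inner_eq_tsum]
    refine tsum_congr fun i => ?_
    rw [hD, hD, hstσ, ContinuousLinearMap.adjoint_inner_left]
  -- the range of the embedding
  set X := lp (fun i => K i) 2 with hX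
  set V : Submodule ℂ X := LinearMap.range j.toLinearMap with hV
  have hVc : IsClosed (V : Set X) := by
    have : (V : Set X) = Set.range j := by
      rw [hV, LinearMap.coe_range]
      rfl
    rw [this]
    exact j.isometry.isClosedEmbedding.isClosed_range
  haveI : CompleteSpace V := hVc.completeSpace_coe
  set jV : H ≃ₗᵢ[ℂ] V := j.equivRange with hjVdef
  have hjVcoe : ∀ x : H, (jV x : X) = j x := fun x => by
    rw [hjVdef]; exact j.equivRange_apply_coe x
  have hjVsymm : ∀ v : V, j (jV.symm v) = (v : X) := by
    intro v
    conv_rhs => rw [← jV.apply_symm_apply v]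
    rw [hjVcoe]
  -- invariance of the range and of its orthogonal complement
  have hmemV : ∀ (a : A) (v : X), v ∈ V → D a v ∈ V := by
    rintro a v ⟨h, rfl⟩
    exact ⟨ρ a h, by simpa using hj a h⟩
  have hmemL : ∀ (a : A) (w : X), w ∈ Vᗮ → D a w ∈ Vᗮ := by
    intro a w hw
    rw [Submodule.mem_orthogonal]
    rintro u ⟨h, rfl⟩
    have h1 : (inner ℂ (j h) (D a w) : ℂ)
        = inner ℂ (ContinuousLinearMap.adjoint (D a) (j h)) w :=
      (ContinuousLinearMap.adjoint_inner_left (D a) w (j h)).symm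
    have h2 : ContinuousLinearMap.adjoint (D a) (j h) = j (ρ (st a) h) := by
      rw [← hDadj a, hj]
    have : (j.toLinearMap h : X) = j h := rfl
    rw [this, h1, h2]
    exact (Submodule.mem_orthogonal V w).1 hw _ ⟨ρ (st a) h, rfl⟩
  -- equivariance of the projections
  have hPV : ∀ (a : A) (x : X), Submodule.orthogonalProjectionOnto V (D a x)
      = ⟨D a (Submodule.orthogonalProjectionOnto V x : X), hmemV a _ (Submodule.orthogonalProjectionOnto V x).2⟩ := by
    intro a x
    have hsplit := orthogonalProjection_add_orthogonalProjection_orthogonal V x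
    have h1 : Submodule.orthogonalProjectionOnto V (D a (Submodule.orthogonalProjectionOnto V x : X))
        = ⟨D a (Submodule.orthogonalProjectionOnto V x : X), hmemV a _ (Submodule.orthogonalProjectionOnto V x).2⟩ :=
      Submodule.orthogonalProjectionOnto_mem_subspace_eq_self
        (⟨D a (Submodule.orthogonalProjectionOnto V x : X), hmemV a _ (Submodule.orthogonalProjectionOnto V x).2⟩ : V)
    have h2 : Submodule.orthogonalProjectionOnto V (D a (Submodule.orthogonalProjectionOnto Vᗮ x : X)) = 0 :=
      Submodule.orthogonalProjectionOnto_apply_of_mem_orthogonal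
        (hmemL a _ (Submodule.orthogonalProjectionOnto Vᗮ x).2)
    calc Submodule.orthogonalProjectionOnto V (D a x)
        = Submodule.orthogonalProjectionOnto V (D a ((Submodule.orthogonalProjectionOnto V x : X)
            + (Submodule.orthogonalProjectionOnto Vᗮ x : X))) := by rw [hsplit]
      _ = Submodule.orthogonalProjectionOnto V (D a (Submodule.orthogonalProjectionOnto V x : X))
          + Submodule.orthogonalProjectionOnto V (D a (Submodule.orthogonalProjectionOnto Vᗮ x : X)) := by
          rw [map_add, map_add]
      _ = _ := by rw [h1, h2, add_zero]
  have hPL : ∀ (a : A) (x : X), Submodule.orthogonalProjectionOnto Vᗮ (D a x)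
      = ⟨D a (Submodule.orthogonalProjectionOnto Vᗮ x : X), hmemL a _ (Submodule.orthogonalProjectionOnto Vᗮ x).2⟩ := by
    intro a x
    have hsplit := orthogonalProjection_add_orthogonalProjection_orthogonal V x
    have h1 : Submodule.orthogonalProjectionOnto Vᗮ (D a (Submodule.orthogonalProjectionOnto Vᗮ x : X))
        = ⟨D a (Submodule.orthogonalProjectionOnto Vᗮ x : X), hmemL a _ (Submodule.orthogonalProjectionOnto Vᗮ x).2⟩ :=
      Submodule.orthogonalProjectionOnto_mem_subspace_eq_self
        (⟨D a (Submodule.orthogonalProjectionOnto Vᗮ x : X), hmemL a _ (Submodule.orthogonalProjectionOnto Vᗮ x).2⟩ : Vᗮ)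
    have h2 : Submodule.orthogonalProjectionOnto Vᗮ (D a (Submodule.orthogonalProjectionOnto V x : X)) = 0 :=
      Submodule.orthogonalProjectionOnto_apply_of_mem_orthogonal
        (Submodule.le_orthogonal_orthogonal V (hmemV a _ (Submodule.orthogonalProjectionOnto V x).2))
    calc Submodule.orthogonalProjectionOnto Vᗮ (D a x)
        = Submodule.orthogonalProjectionOnto Vᗮ (D a ((Submodule.orthogonalProjectionOnto V x : X)
            + (Submodule.orthogonalProjectionOnto Vᗮ x : X))) := by rw [hsplit]
      _ = Submodule.orthogonalProjectionOnto Vᗮ (D a (Submodule.orthogonalProjectionOnto V x : X))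
          + Submodule.orthogonalProjectionOnto Vᗮ (D a (Submodule.orthogonalProjectionOnto Vᗮ x : X)) := by
          rw [map_add, map_add]
      _ = _ := by rw [h1, h2, zero_add]
  -- the decomposition of `X` as `H ⊕ Vᗮ`
  set d : X ≃ₗᵢ[ℂ] WithLp 2 (H × Vᗮ) :=
    (orthSplit V).trans (prodCongrLI jV.symm (LinearIsometryEquiv.refl ℂ Vᗮ)) with hd
  have hdfst : ∀ y : X, (d y).fst = jV.symm (Submodule.orthogonalProjectionOnto V y) := fun y => rfl
  have hdsnd : ∀ y : X, (d y).snd = Submodule.orthogonalProjectionOnto Vᗮ y := fun y => rfl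
  have hdsymm : ∀ p : WithLp 2 (H × Vᗮ), d.symm p = j p.fst + (p.snd : X) := by
    intro p
    have h1 : d.symm p
        = ((((prodCongrLI jV.symm (LinearIsometryEquiv.refl ℂ Vᗮ)).symm p).fst : V) : X)
          + ((((prodCongrLI jV.symm (LinearIsometryEquiv.refl ℂ Vᗮ)).symm p).snd : Vᗮ) : X) :=
      rfl
    rw [h1, prodCongrLI_symm_fst, prodCongrLI_symm_snd, LinearIsometryEquiv.symm_symm, hjVcoe]
    rfl
  have hd1 : ∀ (a : A) (y : X), j ((d (D a y)).fst) = D a (j ((d y).fst)) := by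
    intro a y
    rw [hdfst, hdfst, hjVsymm, hjVsymm, hPV]
  have hd2 : ∀ (a : A) (y : X), ((d (D a y)).snd : X) = D a ((d y).snd : X) := by
    intro a y
    rw [hdsnd, hdsnd, hPL]
  have hd1' : ∀ (a : A) (y : X), (d (D a y)).fst = ρ a ((d y).fst) := by
    intro a y
    apply j.injective
    rw [hd1, hj]
  -- the map `g : H ≃ H ⊕ X`
  set HH := lp (fun _ : ι => H) 2 with hHH
  set c1 : HH ≃ₗᵢ[ℂ] lp (fun i => WithLp 2 (H × K i)) 2 :=
    lpCongr (fun i => (f i).symm) with hc1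
  set g : H ≃ₗᵢ[ℂ] WithLp 2 (H × X) :=
    e0.symm.trans ((c1.trans lpProdSplit).trans
      (prodCongrLI e0 (LinearIsometryEquiv.refl ℂ X))) with hg
  have hg1 : ∀ (a : A) (x : H), (g (ρ a x)).fst = ρ a ((g x).fst) := by
    intro a x
    show e0 ((lpProdSplit (c1 (e0.symm (ρ a x)))).fst) = ρ a (e0 ((lpProdSplit (c1 (e0.symm x))).fst))
    rw [← he0]
    congr 1
    apply lp.ext
    funext i
    rw [hDH]
    show ((f i).symm ((e0.symm (ρ a x) : ∀ _ : ι, H) i)).fst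
      = ρ a ((f i).symm ((e0.symm x : ∀ _ : ι, H) i)).fst
    rw [he0s, hDH, hfs]
    rw [WithLp.equiv_symm_fst]
  have hg2 : ∀ (a : A) (x : H), (g (ρ a x)).snd = D a ((g x).snd) := by
    intro a x
    show (lpProdSplit (c1 (e0.symm (ρ a x)))).snd = D a ((lpProdSplit (c1 (e0.symm x))).snd)
    apply lp.ext
    funext i
    rw [hD]
    show ((f i).symm ((e0.symm (ρ a x) : ∀ _ : ι, H) i)).snd
      = σ i a ((f i).symm ((e0.symm x : ∀ _ : ι, H) i)).snd
    rw [he0s, hDH, hfs]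
    rw [WithLp.equiv_symm_snd]
  -- the absorption `H ⊕ H ≃ H`
  obtain ⟨q⟩ : Nonempty (Option ι ≃ ι) := by
    rw [← Cardinal.eq, Cardinal.mk_option, Cardinal.mk_add_one_eq]
  set m : WithLp 2 (H × H) ≃ₗᵢ[ℂ] H :=
    (prodCongrLI (LinearIsometryEquiv.refl ℂ H) e0.symm).trans
      ((lpOptionSplit H).symm.trans ((lpReindex q H).trans e0)) with hmdef
  have hm : ∀ (a : A) (p : WithLp 2 (H × H)),
      m ((WithLp.equiv 2 (H × H)).symm (ρ a p.fst, ρ a p.snd)) = ρ a (m p) := by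
    intro a p
    show e0 (lpReindex q H ((lpOptionSplit H).symm
        (prodCongrLI (LinearIsometryEquiv.refl ℂ H) e0.symm
          ((WithLp.equiv 2 (H × H)).symm (ρ a p.fst, ρ a p.snd)))))
      = ρ a (e0 (lpReindex q H ((lpOptionSplit H).symm
        (prodCongrLI (LinearIsometryEquiv.refl ℂ H) e0.symm p))))
    rw [← he0]
    congr 1
    apply lp.ext
    funext i
    rw [hDH]
    simp only [lpReindex_apply, lpOptionSplit_symm_apply, prodCongrLI_fst, prodCongrLI_snd,
      WithLp.equiv_symm_fst, WithLp.equiv_symm_snd, LinearIsometryEquiv.coe_refl, id_eq]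
    rw [he0s]
    cases q.symm i with
    | none => rfl
    | some k =>
      show (DH a (e0.symm p.snd) : ∀ _ : ι, H) k = ρ a ((e0.symm p.snd : ∀ _ : ι, H) k)
      rw [hDH]
  -- assembling the final equivalence
  set t : WithLp 2 (H × X) ≃ₗᵢ[ℂ] X :=
    (prodCongrLI (LinearIsometryEquiv.refl ℂ H) d).trans
      (prodAssocLI.trans ((prodCongrLI m (LinearIsometryEquiv.refl ℂ Vᗮ)).trans d.symm)) with ht
  refine ⟨g.trans t, ?_⟩
  intro a x
  have hkey : ∀ y : H, (g.trans t) y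
      = j (m ((WithLp.equiv 2 (H × H)).symm ((g y).fst, (d ((g y).snd)).fst)))
        + ((d ((g y).snd)).snd : X) := by
    intro y
    show t (g y) = _
    rw [ht]
    simp only [LinearIsometryEquiv.trans_apply]
    rw [hdsymm]
    simp only [prodCongrLI_fst, prodCongrLI_snd, prodAssocLI_fst, prodAssocLI_snd,
      LinearIsometryEquiv.coe_refl, id_eq]
  have hmx := hm a ((WithLp.equiv 2 (H × H)).symm ((g x).fst, (d ((g x).snd)).fst))
  rw [WithLp.equiv_symm_fst, WithLp.equiv_symm_snd] at hmx
  rw [hkey, hkey, hg1, hg2, hd1', hd2, hmx, map_add, hj]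

end
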